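/- Let A ∈ Sp(4, ℤ/Nℤ) have 4 distinct eigenvalues (over an algebraic closure) and suppose (ℤ/Nℤ)^4 = E₁ ⊕ E₂ is a decomposition into two A-invariant orthogonal symplectic planes. If B ∈ Sp(4, ℤ/Nℤ) commutes with A, then B preserves both E₁ and E₂, and the restrictions B₁, B₂ of B to E₁, E₂ (in symplectic bases) lie in SL(2, ℤ/Nℤ). Consequently the map i_N : SL(2,ℤ/Nℤ) × SL(2,ℤ/Nℤ) → Sp(4,ℤ/Nℤ) induced by the decomposition restricts to an isomorphism from C̄₁(N,A) × C̄₂(N,A) onto the centralizer-derived maximal commutative group C(N,A). -/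

import Mathlib

set_option maxHeartbeats 1000000

open Polynomial


/-- The standard symplectic form on `(ℤ/Nℤ)⁴ = (ℤ/Nℤ)² × (ℤ/Nℤ)²`. -/
def omegaV (N : ℕ) (x y : (ZMod N × ZMod N) × (ZMod N × ZMod N)) : ZMod N :=
  x.1.1 * y.2.1 + x.1.2 * y.2.2 - x.2.1 * y.1.1 - x.2.2 * y.1.2

section helpers
variable {N : ℕ}

lemma omegaV_antisymm (x y : (ZMod N × ZMod N) × (ZMod N × ZMod N)) :
    omegaV N x y = - omegaV N y x := by simp [omegaV]; ring

lemma omegaV_self (x : (ZMod N × ZMod N) × (ZMod N × ZMod N)) : omegaV N x x = 0 := by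
  simp [omegaV]; ring

lemma omegaV_quad (a₁ a₂ a₃ a₄ b₁ b₂ b₃ b₄ : ZMod N)
    (x₁ x₂ x₃ x₄ y₁ y₂ y₃ y₄ : (ZMod N × ZMod N) × (ZMod N × ZMod N)) :
    omegaV N (a₁•x₁+a₂•x₂+a₃•x₃+a₄•x₄) (b₁•y₁+b₂•y₂+b₃•y₃+b₄•y₄) =
      a₁*b₁*omegaV N x₁ y₁ + a₁*b₂*omegaV N x₁ y₂ + a₁*b₃*omegaV N x₁ y₃ + a₁*b₄*omegaV N x₁ y₄ +
      a₂*b₁*omegaV N x₂ y₁ + a₂*b₂*omegaV N x₂ y₂ + a₂*b₃*omegaV N x₂ y₃ + a₂*b₄*omegaV N x₂ y₄ +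
      a₃*b₁*omegaV N x₃ y₁ + a₃*b₂*omegaV N x₃ y₂ + a₃*b₃*omegaV N x₃ y₃ + a₃*b₄*omegaV N x₃ y₄ +
      a₄*b₁*omegaV N x₄ y₁ + a₄*b₂*omegaV N x₄ y₂ + a₄*b₃*omegaV N x₄ y₃ + a₄*b₄*omegaV N x₄ y₄ := by
  simp only [omegaV, Prod.fst_add, Prod.snd_add, Prod.smul_fst, Prod.smul_snd, smul_eq_mul]
  ring

lemma omegaV_pair (a₁ a₂ b₁ b₂ : ZMod N) (x₁ x₂ y₁ y₂ : (ZMod N × ZMod N) × (ZMod N × ZMod N)) :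
    omegaV N (a₁•x₁+a₂•x₂) (b₁•y₁+b₂•y₂) =
      a₁*b₁*omegaV N x₁ y₁ + a₁*b₂*omegaV N x₁ y₂ + a₂*b₁*omegaV N x₂ y₁ + a₂*b₂*omegaV N x₂ y₂ := by
  simp only [omegaV, Prod.fst_add, Prod.snd_add, Prod.smul_fst, Prod.smul_snd, smul_eq_mul]
  ring

lemma omegaV_comb_left (a b c d : ZMod N) (x₁ x₂ x₃ x₄ y : (ZMod N × ZMod N) × (ZMod N × ZMod N)) :
    omegaV N (a•x₁+b•x₂+c•x₃+d•x₄) y =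
      a*omegaV N x₁ y + b*omegaV N x₂ y + c*omegaV N x₃ y + d*omegaV N x₄ y := by
  simp only [omegaV, Prod.fst_add, Prod.snd_add, Prod.smul_fst, Prod.smul_snd, smul_eq_mul]
  ring

end helpers

lemma comm2 {F : Type*} [Field F] (A g h : Matrix (Fin 2) (Fin 2) F)
    (hns : ¬(A 0 1 = 0 ∧ A 1 0 = 0 ∧ A 0 0 = A 1 1))
    (hg : g * A = A * g) (hh : h * A = A * h) : g * h = h * g := by
  have eg : ∀ i j, (g * A) i j = (A * g) i j := fun i j => by rw [hg]
  have eh : ∀ i j, (h * A) i j = (A * h) i j := fun i j => by rw [hh]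
  simp only [Matrix.mul_apply, Fin.sum_univ_two] at eg eh
  have eg00 := eg 0 0; have eg01 := eg 0 1; have eg10 := eg 1 0
  have eh00 := eh 0 0; have eh01 := eh 0 1; have eh10 := eh 1 0
  by_cases hb : A 0 1 = 0
  · by_cases hc : A 1 0 = 0
    · have had : A 0 0 - A 1 1 ≠ 0 := fun habs => hns ⟨hb, hc, by linear_combination habs⟩
      have Hg1 : g 1 0 = 0 := by
        have : g 1 0 * (A 0 0 - A 1 1) = 0 := by
          linear_combination eg10 + (g 0 0 - g 1 1) * hc
        exact (mul_eq_zero.1 this).resolve_right had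
      have Hg2 : g 0 1 = 0 := by
        have : g 0 1 * (A 0 0 - A 1 1) = 0 := by
          linear_combination -eg01 + (g 0 0 - g 1 1) * hb
        exact (mul_eq_zero.1 this).resolve_right had
      have Hh1 : h 1 0 = 0 := by
        have : h 1 0 * (A 0 0 - A 1 1) = 0 := by
          linear_combination eh10 + (h 0 0 - h 1 1) * hc
        exact (mul_eq_zero.1 this).resolve_right had
      have Hh2 : h 0 1 = 0 := by
        have : h 0 1 * (A 0 0 - A 1 1) = 0 := by
          linear_combination -eh01 + (h 0 0 - h 1 1) * hb
        exact (mul_eq_zero.1 this).resolve_right had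
      ext i j
      fin_cases i <;> fin_cases j <;>
        simp only [Fin.zero_eta, Fin.mk_one, Fin.isValue, Matrix.mul_apply,
          Fin.sum_univ_two, Hg1, Hg2, Hh1, Hh2] <;> ring
    · -- c ≠ 0
      have G1 : g 0 1 * A 1 0 = g 1 0 * A 0 1 := by linear_combination eg00
      have G2 : g 1 1 * A 1 0 = g 0 0 * A 1 0 - g 1 0 * (A 0 0 - A 1 1) := by
        linear_combination eg10
      have H1 : h 0 1 * A 1 0 = h 1 0 * A 0 1 := by linear_combination eh00
      have H2 : h 1 1 * A 1 0 = h 0 0 * A 1 0 - h 1 0 * (A 0 0 - A 1 1) := by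
        linear_combination eh10
      ext i j
      fin_cases i <;> fin_cases j <;>
        simp only [Fin.zero_eta, Fin.mk_one, Fin.isValue, Matrix.mul_apply, Fin.sum_univ_two]
      · apply mul_right_cancel₀ hc
        linear_combination h 1 0 * G1 - g 1 0 * H1
      · apply mul_right_cancel₀ (pow_ne_zero 2 hc)
        linear_combination (g 1 0 * (A 0 0 - A 1 1)) * H1 - (h 1 0 * (A 0 0 - A 1 1)) * G1 +
          (g 0 1 * A 1 0) * H2 - (h 0 1 * A 1 0) * G2
      · apply mul_right_cancel₀ hc
        linear_combination h 1 0 * G2 - g 1 0 * H2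
      · apply mul_right_cancel₀ hc
        linear_combination g 1 0 * H1 - h 1 0 * G1
  · -- b ≠ 0
    have G1 : g 1 0 * A 0 1 = g 0 1 * A 1 0 := by linear_combination -eg00
    have G2 : g 1 1 * A 0 1 = g 0 0 * A 0 1 - g 0 1 * (A 0 0 - A 1 1) := by
      linear_combination -eg01
    have H1 : h 1 0 * A 0 1 = h 0 1 * A 1 0 := by linear_combination -eh00
    have H2 : h 1 1 * A 0 1 = h 0 0 * A 0 1 - h 0 1 * (A 0 0 - A 1 1) := by
      linear_combination -eh01
    ext i j
    fin_cases i <;> fin_cases j <;>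
      simp only [Fin.zero_eta, Fin.mk_one, Fin.isValue, Matrix.mul_apply, Fin.sum_univ_two]
    · apply mul_right_cancel₀ hb
      linear_combination g 0 1 * H1 - h 0 1 * G1
    · apply mul_right_cancel₀ hb
      linear_combination g 0 1 * H2 - h 0 1 * G2
    · apply mul_right_cancel₀ (pow_ne_zero 2 hb)
      linear_combination (h 0 1 * (A 0 0 - A 1 1)) * G1 - (g 0 1 * (A 0 0 - A 1 1)) * H1 +
        (h 1 0 * A 0 1) * G2 - (g 1 0 * A 0 1) * H2
    · apply mul_right_cancel₀ hb
      linear_combination h 0 1 * G1 - g 0 1 * H1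


lemma charpoly_two {K : Type*} [Field K] (M : Matrix (Fin 2) (Fin 2) K) :
    M.charpoly = X^2 - C (M 0 0 + M 1 1) * X + C (M 0 0 * M 1 1 - M 0 1 * M 1 0) := by
  rw [Matrix.charpoly, Matrix.det_fin_two, Matrix.charmatrix_apply_eq,
    Matrix.charmatrix_apply_eq, Matrix.charmatrix_apply_ne _ _ _ (by decide),
    Matrix.charmatrix_apply_ne _ _ _ (by decide)]
  simp only [map_add, map_mul, map_sub]
  ring

lemma charpoly_block {K V : Type*} [Field K] [AddCommGroup V] [Module K V]
    [Module.Finite K V] [Module.Free K V]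
    (f : V →ₗ[K] V) (b : Module.Basis (Fin 2 ⊕ Fin 2) K V) (M₁ M₂ : Matrix (Fin 2) (Fin 2) K)
    (h : LinearMap.toMatrix b b f = Matrix.fromBlocks M₁ 0 0 M₂) :
    f.charpoly = M₁.charpoly * M₂.charpoly := by
  rw [← LinearMap.charpoly_toMatrix f b, h, Matrix.charpoly_fromBlocks_zero₁₂]

/-- The symplectic group `Sp(4, ℤ/Nℤ)`, realized as the subgroup of linear automorphisms
of `(ℤ/Nℤ)⁴` preserving the standard symplectic form. -/
def Sp (N : ℕ) :
    Subgroup (((ZMod N × ZMod N) × (ZMod N × ZMod N)) ≃ₗ[ZMod N]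
      ((ZMod N × ZMod N) × (ZMod N × ZMod N))) where
  carrier := {B | ∀ x y, omegaV N (B x) (B y) = omegaV N x y}
  one_mem' := by intro x y; rfl
  mul_mem' := by
    intro a b ha hb x y
    have : (a * b) x = a (b x) := rfl
    have : (a * b) y = a (b y) := rfl
    calc omegaV N ((a * b) x) ((a * b) y) = omegaV N (a (b x)) (a (b y)) := rfl
      _ = omegaV N (b x) (b y) := ha _ _
      _ = omegaV N x y := hb _ _
  inv_mem' := by
    intro a ha x y
    have h := ha (a⁻¹ x) (a⁻¹ y)
    have hx : a (a⁻¹ x) = x := a.apply_symm_apply x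
    have hy : a (a⁻¹ y) = y := a.apply_symm_apply y
    calc omegaV N (a⁻¹ x) (a⁻¹ y) = omegaV N (a (a⁻¹ x)) (a (a⁻¹ y)) := (ha _ _).symm
      _ = omegaV N x y := by rw [hx, hy]

/-- for `A ∈ Sp(4,ℤ/Nℤ)` with `4` distinct eigenvalues (squarefree
characteristic polynomial) and an `A`-invariant orthogonal symplectic decomposition
`(ℤ/Nℤ)⁴ = E₁ ⊕ E₂`: every `B ∈ Sp(4,ℤ/Nℤ)` commuting with `A` preserves `E₁` and `E₂`
and restricts to elements of `SL(2,ℤ/Nℤ)`; moreover the induced map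
`i_N : SL₂ × SL₂ → Sp₄` restricts to an isomorphism from `C̄₁(N,A) × C̄₂(N,A)` onto the
maximal commutative subgroup `C(N,A)`. -/
theorem centralizer_decomposition
    (N : ℕ) [NeZero N] (hN : N.Prime)
    (A : ((ZMod N × ZMod N) × (ZMod N × ZMod N)) ≃ₗ[ZMod N]
      ((ZMod N × ZMod N) × (ZMod N × ZMod N)))
    (hAsp : A ∈ Sp N)
    (hchar : Squarefree (LinearMap.charpoly (A : ((ZMod N × ZMod N) × (ZMod N × ZMod N))
      →ₗ[ZMod N] ((ZMod N × ZMod N) × (ZMod N × ZMod N)))))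
    (e₁ f₁ e₂ f₂ : (ZMod N × ZMod N) × (ZMod N × ZMod N))
    (h11 : omegaV N e₁ f₁ = 1) (h22 : omegaV N e₂ f₂ = 1)
    (hee : omegaV N e₁ e₂ = 0) (hef : omegaV N e₁ f₂ = 0)
    (hfe : omegaV N f₁ e₂ = 0) (hff : omegaV N f₁ f₂ = 0)
    (hspan : ∀ v : (ZMod N × ZMod N) × (ZMod N × ZMod N),
      ∃ a b c d : ZMod N, v = a • e₁ + b • f₁ + c • e₂ + d • f₂)
    (hAE₁ : ∀ x ∈ Submodule.span (ZMod N) {e₁, f₁}, A x ∈ Submodule.span (ZMod N) {e₁, f₁})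
    (hAE₂ : ∀ x ∈ Submodule.span (ZMod N) {e₂, f₂}, A x ∈ Submodule.span (ZMod N) {e₂, f₂})
    (A₁ A₂ : Matrix.SpecialLinearGroup (Fin 2) (ZMod N))
    (hA₁ : A e₁ = A₁.1 0 0 • e₁ + A₁.1 1 0 • f₁ ∧ A f₁ = A₁.1 0 1 • e₁ + A₁.1 1 1 • f₁)
    (hA₂ : A e₂ = A₂.1 0 0 • e₂ + A₂.1 1 0 • f₂ ∧ A f₂ = A₂.1 0 1 • e₂ + A₂.1 1 1 • f₂)
    (C : Subgroup (((ZMod N × ZMod N) × (ZMod N × ZMod N)) ≃ₗ[ZMod N]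
      ((ZMod N × ZMod N) × (ZMod N × ZMod N))))
    (hCsp : C ≤ Sp N) (hAC : A ∈ C)
    (hCcomm : ∀ x ∈ C, ∀ y ∈ C, x * y = y * x)
    (hCmax : ∀ C', C' ≤ Sp N → (∀ x ∈ C', ∀ y ∈ C', x * y = y * x) → C ≤ C' → C' = C)
    (C₁ C₂ : Subgroup (Matrix.SpecialLinearGroup (Fin 2) (ZMod N)))
    (hA₁C : A₁ ∈ C₁) (hA₂C : A₂ ∈ C₂)
    (hC₁comm : ∀ x ∈ C₁, ∀ y ∈ C₁, x * y = y * x)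
    (hC₂comm : ∀ x ∈ C₂, ∀ y ∈ C₂, x * y = y * x)
    (hC₁max : ∀ C', (∀ x ∈ C', ∀ y ∈ C', x * y = y * x) → C₁ ≤ C' → C' = C₁)
    (hC₂max : ∀ C', (∀ x ∈ C', ∀ y ∈ C', x * y = y * x) → C₂ ≤ C' → C' = C₂)
    (iN : Matrix.SpecialLinearGroup (Fin 2) (ZMod N) ×
        Matrix.SpecialLinearGroup (Fin 2) (ZMod N) →
      (((ZMod N × ZMod N) × (ZMod N × ZMod N)) ≃ₗ[ZMod N]
        ((ZMod N × ZMod N) × (ZMod N × ZMod N))))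
    (hiN : ∀ B₁ B₂,
      iN (B₁, B₂) e₁ = B₁.1 0 0 • e₁ + B₁.1 1 0 • f₁ ∧
      iN (B₁, B₂) f₁ = B₁.1 0 1 • e₁ + B₁.1 1 1 • f₁ ∧
      iN (B₁, B₂) e₂ = B₂.1 0 0 • e₂ + B₂.1 1 0 • f₂ ∧
      iN (B₁, B₂) f₂ = B₂.1 0 1 • e₂ + B₂.1 1 1 • f₂) :
    (∀ B, B ∈ Sp N → B * A = A * B →
      ((∀ x ∈ Submodule.span (ZMod N) {e₁, f₁}, B x ∈ Submodule.span (ZMod N) {e₁, f₁}) ∧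
       (∀ x ∈ Submodule.span (ZMod N) {e₂, f₂}, B x ∈ Submodule.span (ZMod N) {e₂, f₂}) ∧
       ∃ B₁ B₂ : Matrix (Fin 2) (Fin 2) (ZMod N), B₁.det = 1 ∧ B₂.det = 1 ∧
         B e₁ = B₁ 0 0 • e₁ + B₁ 1 0 • f₁ ∧ B f₁ = B₁ 0 1 • e₁ + B₁ 1 1 • f₁ ∧
         B e₂ = B₂ 0 0 • e₂ + B₂ 1 0 • f₂ ∧ B f₂ = B₂ 0 1 • e₂ + B₂ 1 1 • f₂)) ∧
    Function.Injective iN ∧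
    (∀ B, B ∈ C ↔ ∃ B₁ ∈ C₁, ∃ B₂ ∈ C₂, B = iN (B₁, B₂)) := by
  haveI := Fact.mk hN
  -- abbreviations
  set Al := (A : ((ZMod N × ZMod N) × (ZMod N × ZMod N))
      →ₗ[ZMod N] ((ZMod N × ZMod N) × (ZMod N × ZMod N))) with hAldef
  -- derived omega values
  have hf1e1 : omegaV N f₁ e₁ = -1 := by rw [omegaV_antisymm, h11]
  have hf2e2 : omegaV N f₂ e₂ = -1 := by rw [omegaV_antisymm, h22]
  have he2e1 : omegaV N e₂ e₁ = 0 := by rw [omegaV_antisymm, hee, neg_zero]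
  have hf2e1 : omegaV N f₂ e₁ = 0 := by rw [omegaV_antisymm, hef, neg_zero]
  have he2f1 : omegaV N e₂ f₁ = 0 := by rw [omegaV_antisymm, hfe, neg_zero]
  have hf2f1 : omegaV N f₂ f₁ = 0 := by rw [omegaV_antisymm, hff, neg_zero]
  -- linear independence
  have hsub : ∀ a b c d : ZMod N, a•e₁+b•f₁+c•e₂+d•f₂ = 0 →
      a = 0 ∧ b = 0 ∧ c = 0 ∧ d = 0 := by
    intro a b c d h
    have key : ∀ y, a * omegaV N e₁ y + b * omegaV N f₁ y + c * omegaV N e₂ y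
        + d * omegaV N f₂ y = 0 := by
      intro y
      rw [← omegaV_comb_left, h]
      simp [omegaV]
    refine ⟨?_, ?_, ?_, ?_⟩
    · simpa [h11, omegaV_self, he2f1, hf2f1] using key f₁
    · simpa [hf1e1, omegaV_self, he2e1, hf2e1] using key e₁
    · simpa [hef, hff, h22, omegaV_self] using key f₂
    · simpa [hee, hfe, hf2e2, omegaV_self] using key e₂
  -- coefficient comparison helpers
  have quad_eq : ∀ a b c d a' b' c' d' : ZMod N,
      a•e₁+b•f₁+c•e₂+d•f₂ = a'•e₁+b'•f₁+c'•e₂+d'•f₂ →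
      a = a' ∧ b = b' ∧ c = c' ∧ d = d' := by
    intro a b c d a' b' c' d' h
    have h0 : (a-a')•e₁+(b-b')•f₁+(c-c')•e₂+(d-d')•f₂ = 0 := by
      rw [show (a-a')•e₁+(b-b')•f₁+(c-c')•e₂+(d-d')•f₂
          = (a•e₁+b•f₁+c•e₂+d•f₂) - (a'•e₁+b'•f₁+c'•e₂+d'•f₂) from by module, h, sub_self]
    obtain ⟨h1, h2, h3, h4⟩ := hsub _ _ _ _ h0
    exact ⟨sub_eq_zero.1 h1, sub_eq_zero.1 h2, sub_eq_zero.1 h3, sub_eq_zero.1 h4⟩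
  have pair_eq₁ : ∀ s t s' t' : ZMod N, s•e₁+t•f₁ = s'•e₁+t'•f₁ → s = s' ∧ t = t' := by
    intro s t s' t' h
    have h' := quad_eq s t 0 0 s' t' 0 0 (by simpa using h)
    exact ⟨h'.1, h'.2.1⟩
  have pair_eq₂ : ∀ s t s' t' : ZMod N, s•e₂+t•f₂ = s'•e₂+t'•f₂ → s = s' ∧ t = t' := by
    intro s t s' t' h
    have h' := quad_eq 0 0 s t 0 0 s' t' (by simpa using h)
    exact ⟨h'.2.2.1, h'.2.2.2⟩
  -- extensionality for linear equivs
  have hext : ∀ (f g : ((ZMod N × ZMod N) × (ZMod N × ZMod N)) ≃ₗ[ZMod N]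
      ((ZMod N × ZMod N) × (ZMod N × ZMod N))),
      f e₁ = g e₁ → f f₁ = g f₁ → f e₂ = g e₂ → f f₂ = g f₂ → f = g := by
    intro f g h1 h2 h3 h4
    apply LinearEquiv.toLinearMap_injective
    apply LinearMap.ext
    intro x
    obtain ⟨a, b, c, d, rfl⟩ := hspan x
    simp only [LinearEquiv.coe_coe, map_add, map_smul, h1, h2, h3, h4]
  -- characteristic polynomial factorization
  set P₁ : Polynomial (ZMod N) := X^2 - Polynomial.C (A₁.1 0 0 + A₁.1 1 1) * X + Polynomial.C 1 with hP₁
  set P₂ : Polynomial (ZMod N) := X^2 - Polynomial.C (A₂.1 0 0 + A₂.1 1 1) * X + Polynomial.C 1 with hP₂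
  have hdetA₁ : A₁.1 0 0 * A₁.1 1 1 - A₁.1 0 1 * A₁.1 1 0 = 1 := by
    rw [← Matrix.det_fin_two]; exact A₁.2
  have hdetA₂ : A₂.1 0 0 * A₂.1 1 1 - A₂.1 0 1 * A₂.1 1 0 = 1 := by
    rw [← Matrix.det_fin_two]; exact A₂.2
  have hAl : ∀ y, Al y = A y := fun _ => rfl
  have hcp : LinearMap.charpoly Al = P₁ * P₂ := by
    have hli : LinearIndependent (ZMod N) (Sum.elim ![e₁, f₁] ![e₂, f₂]) := by
      rw [Fintype.linearIndependent_iff]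
      intro g hg
      rw [Fintype.sum_sum_type] at hg
      simp only [Fin.sum_univ_two, Sum.elim_inl, Sum.elim_inr,
        Matrix.cons_val_zero, Matrix.cons_val_one, Matrix.head_cons] at hg
      have hsum : (g (Sum.inl 0)) • e₁ + (g (Sum.inl 1)) • f₁ + (g (Sum.inr 0)) • e₂
          + (g (Sum.inr 1)) • f₂ = 0 := by
        linear_combination (norm := module) hg
      obtain ⟨k1, k2, k3, k4⟩ := hsub _ _ _ _ hsum
      rintro (i | i) <;> fin_cases i <;> assumption
    have hspa : ⊤ ≤ Submodule.span (ZMod N) (Set.range (Sum.elim ![e₁, f₁] ![e₂, f₂])) := by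
      intro x _
      obtain ⟨a, b, c, d, rfl⟩ := hspan x
      have m1 : e₁ ∈ Set.range (Sum.elim ![e₁, f₁] ![e₂, f₂]) := ⟨Sum.inl 0, rfl⟩
      have m2 : f₁ ∈ Set.range (Sum.elim ![e₁, f₁] ![e₂, f₂]) := ⟨Sum.inl 1, rfl⟩
      have m3 : e₂ ∈ Set.range (Sum.elim ![e₁, f₁] ![e₂, f₂]) := ⟨Sum.inr 0, rfl⟩
      have m4 : f₂ ∈ Set.range (Sum.elim ![e₁, f₁] ![e₂, f₂]) := ⟨Sum.inr 1, rfl⟩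
      exact add_mem (add_mem (add_mem
        (Submodule.smul_mem _ _ (Submodule.subset_span m1))
        (Submodule.smul_mem _ _ (Submodule.subset_span m2)))
        (Submodule.smul_mem _ _ (Submodule.subset_span m3)))
        (Submodule.smul_mem _ _ (Submodule.subset_span m4))
    set bV : Module.Basis (Fin 2 ⊕ Fin 2) (ZMod N) ((ZMod N × ZMod N) × (ZMod N × ZMod N)) :=
      Module.Basis.mk hli hspa with hbV
    have hb1 : bV (Sum.inl 0) = e₁ := by rw [hbV, Module.Basis.mk_apply]; rfl
    have hb2 : bV (Sum.inl 1) = f₁ := by rw [hbV, Module.Basis.mk_apply]; rfl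
    have hb3 : bV (Sum.inr 0) = e₂ := by rw [hbV, Module.Basis.mk_apply]; rfl
    have hb4 : bV (Sum.inr 1) = f₂ := by rw [hbV, Module.Basis.mk_apply]; rfl
    have hAb1 : Al (bV (Sum.inl 0)) = A₁.1 0 0 • bV (Sum.inl 0) + A₁.1 1 0 • bV (Sum.inl 1) := by
      rw [hb1, hb2, hAl]; exact hA₁.1
    have hAb2 : Al (bV (Sum.inl 1)) = A₁.1 0 1 • bV (Sum.inl 0) + A₁.1 1 1 • bV (Sum.inl 1) := by
      rw [hb1, hb2, hAl]; exact hA₁.2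
    have hAb3 : Al (bV (Sum.inr 0)) = A₂.1 0 0 • bV (Sum.inr 0) + A₂.1 1 0 • bV (Sum.inr 1) := by
      rw [hb3, hb4, hAl]; exact hA₂.1
    have hAb4 : Al (bV (Sum.inr 1)) = A₂.1 0 1 • bV (Sum.inr 0) + A₂.1 1 1 • bV (Sum.inr 1) := by
      rw [hb3, hb4, hAl]; exact hA₂.2
    have hmat : LinearMap.toMatrix bV bV Al = Matrix.fromBlocks A₁.1 0 0 A₂.1 := by
      ext i j
      rcases i with (i | i) <;> rcases j with (j | j) <;> fin_cases i <;> fin_cases j <;>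
        simp [LinearMap.toMatrix_apply, hAb1, hAb2, hAb3, hAb4, map_add, map_smul,
          Module.Basis.repr_self, Finsupp.single_apply, Matrix.fromBlocks]
    rw [charpoly_block Al bV A₁.1 A₂.1 hmat, charpoly_two, charpoly_two, hdetA₁, hdetA₂,
      hP₁, hP₂]
  have hsf : Squarefree (P₁ * P₂) := by rw [← hcp]; exact hchar
  have hcop : IsCoprime P₁ P₂ := by
    have hrel : IsRelPrime P₁ P₂ := (squarefree_mul_iff.mp hsf).1
    exact isRelPrime_iff_isCoprime.mp hrel
  -- aeval computations
  have haev : ∀ (t : ZMod N) x, (aeval Al (X^2 - Polynomial.C t * X + Polynomial.C 1)) x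
      = Al (Al x) - t • Al x + x := by
    intro t x
    rw [pow_two]
    simp only [map_add, map_sub, map_mul, aeval_X, aeval_C, map_one,
      LinearMap.add_apply, LinearMap.sub_apply, Module.End.mul_apply,
      Module.algebraMap_end_apply, Module.End.one_apply]
  have hP₁E₁ : ∀ x ∈ Submodule.span (ZMod N) {e₁, f₁}, aeval Al P₁ x = 0 := by
    have hle : Submodule.span (ZMod N) {e₁, f₁} ≤ LinearMap.ker (aeval Al P₁) := by
      rw [Submodule.span_le]
      rintro y hy
      rcases Set.mem_insert_iff.1 hy with rfl | hy
      · rw [SetLike.mem_coe, LinearMap.mem_ker, hP₁, haev]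
        simp only [hAl, hA₁.1, hA₁.2, map_add, map_smul]
        match_scalars
        · linear_combination -hdetA₁
        · ring
      · rw [Set.mem_singleton_iff] at hy
        subst hy
        rw [SetLike.mem_coe, LinearMap.mem_ker, hP₁, haev]
        simp only [hAl, hA₁.1, hA₁.2, map_add, map_smul]
        match_scalars
        · ring
        · linear_combination -hdetA₁
    exact fun x hx => LinearMap.mem_ker.1 (hle hx)
  have hP₂E₂ : ∀ x ∈ Submodule.span (ZMod N) {e₂, f₂}, aeval Al P₂ x = 0 := by
    have hle : Submodule.span (ZMod N) {e₂, f₂} ≤ LinearMap.ker (aeval Al P₂) := by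
      rw [Submodule.span_le]
      rintro y hy
      rcases Set.mem_insert_iff.1 hy with rfl | hy
      · rw [SetLike.mem_coe, LinearMap.mem_ker, hP₂, haev]
        simp only [hAl, hA₂.1, hA₂.2, map_add, map_smul]
        match_scalars
        · linear_combination -hdetA₂
        · ring
      · rw [Set.mem_singleton_iff] at hy
        subst hy
        rw [SetLike.mem_coe, LinearMap.mem_ker, hP₂, haev]
        simp only [hAl, hA₂.1, hA₂.2, map_add, map_smul]
        match_scalars
        · ring
        · linear_combination -hdetA₂
    exact fun x hx => LinearMap.mem_ker.1 (hle hx)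
  have hmm1 : ∀ a b : ZMod N, a•e₁+b•f₁ ∈ Submodule.span (ZMod N) {e₁, f₁} := by
    intro a b
    exact add_mem (Submodule.smul_mem _ _ (Submodule.subset_span (Set.mem_insert _ _)))
      (Submodule.smul_mem _ _ (Submodule.subset_span
        (Set.mem_insert_iff.mpr (Or.inr rfl))))
  have hmm2 : ∀ a b : ZMod N, a•e₂+b•f₂ ∈ Submodule.span (ZMod N) {e₂, f₂} := by
    intro a b
    exact add_mem (Submodule.smul_mem _ _ (Submodule.subset_span (Set.mem_insert _ _)))
      (Submodule.smul_mem _ _ (Submodule.subset_span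
        (Set.mem_insert_iff.mpr (Or.inr rfl))))
  obtain ⟨u, v, huv⟩ := hcop
  have hsplitmap : aeval Al (u*P₁+v*P₂) = aeval Al u * aeval Al P₁ + aeval Al v * aeval Al P₂ := by
    rw [map_add, map_mul, map_mul]
  have hker₁ : ∀ x, aeval Al P₁ x = 0 → x ∈ Submodule.span (ZMod N) {e₁, f₁} := by
    intro x hx
    obtain ⟨a, b, c, d, rfl⟩ := hspan x
    have hre : a•e₁+b•f₁+c•e₂+d•f₂ = (a•e₁+b•f₁) + (c•e₂+d•f₂) := by module
    rw [hre] at hx ⊢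
    rw [map_add, hP₁E₁ _ (hmm1 a b), zero_add] at hx
    have hw2 : aeval Al P₂ (c•e₂+d•f₂) = 0 := hP₂E₂ _ (hmm2 c d)
    have hw0 : c•e₂+d•f₂ = 0 := by
      have h1' : (aeval Al u * aeval Al P₁ + aeval Al v * aeval Al P₂) (c•e₂+d•f₂)
          = c•e₂+d•f₂ := by
        rw [← hsplitmap, huv]; simp
      rw [LinearMap.add_apply, Module.End.mul_apply,
        Module.End.mul_apply, hx, hw2, map_zero, map_zero, add_zero] at h1'
      exact h1'.symm
    rw [hw0, add_zero]
    exact hmm1 a b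
  have hker₂ : ∀ x, aeval Al P₂ x = 0 → x ∈ Submodule.span (ZMod N) {e₂, f₂} := by
    intro x hx
    obtain ⟨a, b, c, d, rfl⟩ := hspan x
    have hre : a•e₁+b•f₁+c•e₂+d•f₂ = (c•e₂+d•f₂) + (a•e₁+b•f₁) := by module
    rw [hre] at hx ⊢
    rw [map_add, hP₂E₂ _ (hmm2 c d), zero_add] at hx
    have hw2 : aeval Al P₁ (a•e₁+b•f₁) = 0 := hP₁E₁ _ (hmm1 a b)
    have hw0 : a•e₁+b•f₁ = 0 := by
      have h1' : (aeval Al u * aeval Al P₁ + aeval Al v * aeval Al P₂) (a•e₁+b•f₁)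
          = a•e₁+b•f₁ := by
        rw [← hsplitmap, huv]; simp
      rw [LinearMap.add_apply, Module.End.mul_apply,
        Module.End.mul_apply, hw2, hx, map_zero, map_zero, add_zero] at h1'
      exact h1'.symm
    rw [hw0, add_zero]
    exact hmm2 c d
  -- part 1
  have part1 : ∀ B, B ∈ Sp N → B * A = A * B →
      ((∀ x ∈ Submodule.span (ZMod N) {e₁, f₁}, B x ∈ Submodule.span (ZMod N) {e₁, f₁}) ∧
       (∀ x ∈ Submodule.span (ZMod N) {e₂, f₂}, B x ∈ Submodule.span (ZMod N) {e₂, f₂}) ∧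
       ∃ B₁ B₂ : Matrix (Fin 2) (Fin 2) (ZMod N), B₁.det = 1 ∧ B₂.det = 1 ∧
         B e₁ = B₁ 0 0 • e₁ + B₁ 1 0 • f₁ ∧ B f₁ = B₁ 0 1 • e₁ + B₁ 1 1 • f₁ ∧
         B e₂ = B₂ 0 0 • e₂ + B₂ 1 0 • f₂ ∧ B f₂ = B₂ 0 1 • e₂ + B₂ 1 1 • f₂) := by
    intro B hBsp hBA
    have hc : ∀ x, B (A x) = A (B x) := by
      intro x
      have h1 : (B * A) x = B (A x) := rfl
      have h2 : (A * B) x = A (B x) := rfl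
      rw [← h1, ← h2, hBA]
    have hBP : ∀ (t : ZMod N) x, (aeval Al (X^2 - Polynomial.C t * X + Polynomial.C 1)) (B x)
        = B ((aeval Al (X^2 - Polynomial.C t * X + Polynomial.C 1)) x) := by
      intro t x
      rw [haev, haev, map_add, map_sub, map_smul]
      simp only [hAl, hc]
    have pre1 : ∀ x ∈ Submodule.span (ZMod N) {e₁, f₁},
        B x ∈ Submodule.span (ZMod N) {e₁, f₁} := by
      intro x hx
      apply hker₁
      rw [hP₁, hBP, ← hP₁, hP₁E₁ x hx, map_zero]
    have pre2 : ∀ x ∈ Submodule.span (ZMod N) {e₂, f₂},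
        B x ∈ Submodule.span (ZMod N) {e₂, f₂} := by
      intro x hx
      apply hker₂
      rw [hP₂, hBP, ← hP₂, hP₂E₂ x hx, map_zero]
    obtain ⟨p, r, hpe⟩ := Submodule.mem_span_pair.1
      (pre1 e₁ (Submodule.subset_span (Set.mem_insert _ _)))
    obtain ⟨q, s, hqf⟩ := Submodule.mem_span_pair.1
      (pre1 f₁ (Submodule.subset_span (Set.mem_insert_iff.mpr (Or.inr rfl))))
    obtain ⟨p', r', hpe'⟩ := Submodule.mem_span_pair.1
      (pre2 e₂ (Submodule.subset_span (Set.mem_insert _ _)))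
    obtain ⟨q', s', hqf'⟩ := Submodule.mem_span_pair.1
      (pre2 f₂ (Submodule.subset_span (Set.mem_insert_iff.mpr (Or.inr rfl))))
    have hω1 := hBsp e₁ f₁
    rw [← hpe, ← hqf, omegaV_pair, h11, hf1e1, omegaV_self, omegaV_self] at hω1
    have hω2 := hBsp e₂ f₂
    rw [← hpe', ← hqf', omegaV_pair, h22, hf2e2, omegaV_self, omegaV_self] at hω2
    refine ⟨pre1, pre2, !![p, q; r, s], !![p', q'; r', s'], ?_, ?_, ?_, ?_, ?_, ?_⟩
    · rw [Matrix.det_fin_two_of]; linear_combination hω1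
    · rw [Matrix.det_fin_two_of]; linear_combination hω2
    · simpa using hpe.symm
    · simpa using hqf.symm
    · simpa using hpe'.symm
    · simpa using hqf'.symm
  -- injectivity
  have hinj : Function.Injective iN := by
    rintro ⟨x₁, x₂⟩ ⟨y₁, y₂⟩ hxy
    have k1 : x₁.1 0 0 • e₁ + x₁.1 1 0 • f₁ = y₁.1 0 0 • e₁ + y₁.1 1 0 • f₁ := by
      rw [← (hiN x₁ x₂).1, ← (hiN y₁ y₂).1, hxy]
    have k2 : x₁.1 0 1 • e₁ + x₁.1 1 1 • f₁ = y₁.1 0 1 • e₁ + y₁.1 1 1 • f₁ := by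
      rw [← (hiN x₁ x₂).2.1, ← (hiN y₁ y₂).2.1, hxy]
    have k3 : x₂.1 0 0 • e₂ + x₂.1 1 0 • f₂ = y₂.1 0 0 • e₂ + y₂.1 1 0 • f₂ := by
      rw [← (hiN x₁ x₂).2.2.1, ← (hiN y₁ y₂).2.2.1, hxy]
    have k4 : x₂.1 0 1 • e₂ + x₂.1 1 1 • f₂ = y₂.1 0 1 • e₂ + y₂.1 1 1 • f₂ := by
      rw [← (hiN x₁ x₂).2.2.2, ← (hiN y₁ y₂).2.2.2, hxy]
    obtain ⟨m1, m2⟩ := pair_eq₁ _ _ _ _ k1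
    obtain ⟨m3, m4⟩ := pair_eq₁ _ _ _ _ k2
    obtain ⟨m5, m6⟩ := pair_eq₂ _ _ _ _ k3
    obtain ⟨m7, m8⟩ := pair_eq₂ _ _ _ _ k4
    have hx1 : x₁ = y₁ := by
      apply Subtype.ext; ext i j
      fin_cases i <;> fin_cases j <;> assumption
    have hx2 : x₂ = y₂ := by
      apply Subtype.ext; ext i j
      fin_cases i <;> fin_cases j <;> assumption
    rw [hx1, hx2]
  -- multiplicativity of iN
  have hiN_mul : ∀ B₁ B₂ D₁ D₂, iN (B₁, B₂) * iN (D₁, D₂) = iN (B₁*D₁, B₂*D₂) := by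
    intro B₁ B₂ D₁ D₂
    apply hext
    · rw [show (iN (B₁, B₂) * iN (D₁, D₂)) e₁ = iN (B₁, B₂) (iN (D₁, D₂) e₁) from rfl,
        (hiN D₁ D₂).1, map_add, map_smul, map_smul, (hiN B₁ B₂).1, (hiN B₁ B₂).2.1,
        (hiN (B₁*D₁) (B₂*D₂)).1]
      simp only [Matrix.SpecialLinearGroup.coe_mul, Matrix.mul_apply, Fin.sum_univ_two]
      module
    · rw [show (iN (B₁, B₂) * iN (D₁, D₂)) f₁ = iN (B₁, B₂) (iN (D₁, D₂) f₁) from rfl,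
        (hiN D₁ D₂).2.1, map_add, map_smul, map_smul, (hiN B₁ B₂).1, (hiN B₁ B₂).2.1,
        (hiN (B₁*D₁) (B₂*D₂)).2.1]
      simp only [Matrix.SpecialLinearGroup.coe_mul, Matrix.mul_apply, Fin.sum_univ_two]
      module
    · rw [show (iN (B₁, B₂) * iN (D₁, D₂)) e₂ = iN (B₁, B₂) (iN (D₁, D₂) e₂) from rfl,
        (hiN D₁ D₂).2.2.1, map_add, map_smul, map_smul, (hiN B₁ B₂).2.2.1,
        (hiN B₁ B₂).2.2.2, (hiN (B₁*D₁) (B₂*D₂)).2.2.1]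
      simp only [Matrix.SpecialLinearGroup.coe_mul, Matrix.mul_apply, Fin.sum_univ_two]
      module
    · rw [show (iN (B₁, B₂) * iN (D₁, D₂)) f₂ = iN (B₁, B₂) (iN (D₁, D₂) f₂) from rfl,
        (hiN D₁ D₂).2.2.2, map_add, map_smul, map_smul, (hiN B₁ B₂).2.2.1,
        (hiN B₁ B₂).2.2.2, (hiN (B₁*D₁) (B₂*D₂)).2.2.2]
      simp only [Matrix.SpecialLinearGroup.coe_mul, Matrix.mul_apply, Fin.sum_univ_two]
      module
  have hiN_one : iN (1, 1) = 1 := by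
    apply hext
    · rw [(hiN 1 1).1]
      simp [Matrix.SpecialLinearGroup.coe_one, Matrix.one_apply]
    · rw [(hiN 1 1).2.1]
      simp [Matrix.SpecialLinearGroup.coe_one, Matrix.one_apply]
    · rw [(hiN 1 1).2.2.1]
      simp [Matrix.SpecialLinearGroup.coe_one, Matrix.one_apply]
    · rw [(hiN 1 1).2.2.2]
      simp [Matrix.SpecialLinearGroup.coe_one, Matrix.one_apply]
  have hdetSL : ∀ D : Matrix.SpecialLinearGroup (Fin 2) (ZMod N),
      D.1 0 0 * D.1 1 1 - D.1 0 1 * D.1 1 0 = 1 := by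
    intro D; rw [← Matrix.det_fin_two]; exact D.2
  have hiN_sp : ∀ B₁ B₂, iN (B₁, B₂) ∈ Sp N := by
    intro B₁ B₂ x y
    obtain ⟨a, b, c, d, rfl⟩ := hspan x
    obtain ⟨a', b', c', d', rfl⟩ := hspan y
    rw [map_add, map_add, map_add, map_add, map_add, map_add,
      map_smul, map_smul, map_smul, map_smul, map_smul, map_smul, map_smul, map_smul,
      (hiN B₁ B₂).1, (hiN B₁ B₂).2.1, (hiN B₁ B₂).2.2.1, (hiN B₁ B₂).2.2.2]
    have w12 : omegaV N (B₁.1 0 0 • e₁ + B₁.1 1 0 • f₁) (B₁.1 0 1 • e₁ + B₁.1 1 1 • f₁)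
        = 1 := by
      rw [omegaV_pair, h11, hf1e1, omegaV_self, omegaV_self]
      linear_combination hdetSL B₁
    have w21 : omegaV N (B₁.1 0 1 • e₁ + B₁.1 1 1 • f₁) (B₁.1 0 0 • e₁ + B₁.1 1 0 • f₁)
        = -1 := by
      rw [omegaV_pair, h11, hf1e1, omegaV_self, omegaV_self]
      linear_combination -hdetSL B₁
    have w34 : omegaV N (B₂.1 0 0 • e₂ + B₂.1 1 0 • f₂) (B₂.1 0 1 • e₂ + B₂.1 1 1 • f₂)
        = 1 := by
      rw [omegaV_pair, h22, hf2e2, omegaV_self, omegaV_self]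
      linear_combination hdetSL B₂
    have w43 : omegaV N (B₂.1 0 1 • e₂ + B₂.1 1 1 • f₂) (B₂.1 0 0 • e₂ + B₂.1 1 0 • f₂)
        = -1 := by
      rw [omegaV_pair, h22, hf2e2, omegaV_self, omegaV_self]
      linear_combination -hdetSL B₂
    have wz : ∀ s t s' t' : ZMod N,
        omegaV N (s • e₁ + t • f₁) (s' • e₂ + t' • f₂) = 0 := by
      intro s t s' t'
      rw [omegaV_pair, hee, hef, hfe, hff]; ring
    have wz' : ∀ s t s' t' : ZMod N,
        omegaV N (s • e₂ + t • f₂) (s' • e₁ + t' • f₁) = 0 := by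
      intro s t s' t'
      rw [omegaV_pair, he2e1, he2f1, hf2e1, hf2f1]; ring
    rw [omegaV_quad, omegaV_quad, w12, w21, w34, w43,
      omegaV_self, omegaV_self, omegaV_self, omegaV_self,
      wz, wz, wz, wz, wz', wz', wz', wz',
      h11, h22, hee, hef, hfe, hff, hf1e1, hf2e2, he2e1, he2f1, hf2e1, hf2f1,
      omegaV_self, omegaV_self, omegaV_self, omegaV_self]
    all_goals ring
  -- non-scalarity
  have hns₁ : ¬(A₁.1 0 1 = 0 ∧ A₁.1 1 0 = 0 ∧ A₁.1 0 0 = A₁.1 1 1) := by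
    rintro ⟨hb, hc, had⟩
    have hsf₁ : Squarefree P₁ := hsf.of_mul_left
    have hsq : A₁.1 0 0 * A₁.1 0 0 = 1 := by
      linear_combination hdetA₁ + A₁.1 0 0 * had + A₁.1 1 0 * hb
    have heq : P₁ = (X - Polynomial.C (A₁.1 0 0))^2 := by
      have hC : (Polynomial.C (1:ZMod N)) = Polynomial.C (A₁.1 0 0) * Polynomial.C (A₁.1 0 0) := by
        rw [← map_mul, hsq]
      rw [hP₁, ← had, hC]
      simp only [map_add]
      ring
    have hdvd : (X - Polynomial.C (A₁.1 0 0)) * (X - Polynomial.C (A₁.1 0 0)) ∣ P₁ := by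
      rw [heq, pow_two]
    have hunit := hsf₁ _ hdvd
    have hdeg : (X - Polynomial.C (A₁.1 0 0)).degree = 1 := Polynomial.degree_X_sub_C _
    exact (Polynomial.not_isUnit_of_degree_pos _ (by rw [hdeg]; norm_num)) hunit
  have hns₂ : ¬(A₂.1 0 1 = 0 ∧ A₂.1 1 0 = 0 ∧ A₂.1 0 0 = A₂.1 1 1) := by
    rintro ⟨hb, hc, had⟩
    have hsf₂ : Squarefree P₂ := hsf.of_mul_right
    have hsq : A₂.1 0 0 * A₂.1 0 0 = 1 := by
      linear_combination hdetA₂ + A₂.1 0 0 * had + A₂.1 1 0 * hb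
    have heq : P₂ = (X - Polynomial.C (A₂.1 0 0))^2 := by
      have hC : (Polynomial.C (1:ZMod N)) = Polynomial.C (A₂.1 0 0) * Polynomial.C (A₂.1 0 0) := by
        rw [← map_mul, hsq]
      rw [hP₂, ← had, hC]
      simp only [map_add]
      ring
    have hdvd : (X - Polynomial.C (A₂.1 0 0)) * (X - Polynomial.C (A₂.1 0 0)) ∣ P₂ := by
      rw [heq, pow_two]
    have hunit := hsf₂ _ hdvd
    have hdeg : (X - Polynomial.C (A₂.1 0 0)).degree = 1 := Polynomial.degree_X_sub_C _
    exact (Polynomial.not_isUnit_of_degree_pos _ (by rw [hdeg]; norm_num)) hunit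
  -- forward direction
  -- commutativity of centralizers of A₁, A₂
  have hZ₁comm : ∀ x ∈ Subgroup.centralizer ({A₁} : Set (Matrix.SpecialLinearGroup (Fin 2) (ZMod N))),
      ∀ y ∈ Subgroup.centralizer ({A₁} : Set (Matrix.SpecialLinearGroup (Fin 2) (ZMod N))),
      x * y = y * x := by
    intro x hx y hy
    rw [Subgroup.mem_centralizer_iff] at hx hy
    have hx' := hx A₁ (Set.mem_singleton _)
    have hy' := hy A₁ (Set.mem_singleton _)
    have hxm : x.1 * A₁.1 = A₁.1 * x.1 := by
      have := congrArg Subtype.val hx'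
      simp only [Matrix.SpecialLinearGroup.coe_mul] at this
      exact this.symm
    have hym : y.1 * A₁.1 = A₁.1 * y.1 := by
      have := congrArg Subtype.val hy'
      simp only [Matrix.SpecialLinearGroup.coe_mul] at this
      exact this.symm
    apply Subtype.ext
    simp only [Matrix.SpecialLinearGroup.coe_mul]
    exact comm2 A₁.1 x.1 y.1 hns₁ hxm hym
  have hZ₂comm : ∀ x ∈ Subgroup.centralizer ({A₂} : Set (Matrix.SpecialLinearGroup (Fin 2) (ZMod N))),
      ∀ y ∈ Subgroup.centralizer ({A₂} : Set (Matrix.SpecialLinearGroup (Fin 2) (ZMod N))),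
      x * y = y * x := by
    intro x hx y hy
    rw [Subgroup.mem_centralizer_iff] at hx hy
    have hx' := hx A₂ (Set.mem_singleton _)
    have hy' := hy A₂ (Set.mem_singleton _)
    have hxm : x.1 * A₂.1 = A₂.1 * x.1 := by
      have := congrArg Subtype.val hx'
      simp only [Matrix.SpecialLinearGroup.coe_mul] at this
      exact this.symm
    have hym : y.1 * A₂.1 = A₂.1 * y.1 := by
      have := congrArg Subtype.val hy'
      simp only [Matrix.SpecialLinearGroup.coe_mul] at this
      exact this.symm
    apply Subtype.ext
    simp only [Matrix.SpecialLinearGroup.coe_mul]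
    exact comm2 A₂.1 x.1 y.1 hns₂ hxm hym
  have hZ₁eq : Subgroup.centralizer ({A₁} : Set (Matrix.SpecialLinearGroup (Fin 2) (ZMod N)))
      = C₁ := by
    apply hC₁max _ hZ₁comm
    intro g hg
    rw [Subgroup.mem_centralizer_iff]
    intro h hh
    rw [Set.mem_singleton_iff] at hh
    subst hh
    exact hC₁comm h hA₁C g hg
  have hZ₂eq : Subgroup.centralizer ({A₂} : Set (Matrix.SpecialLinearGroup (Fin 2) (ZMod N)))
      = C₂ := by
    apply hC₂max _ hZ₂comm
    intro g hg
    rw [Subgroup.mem_centralizer_iff]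
    intro h hh
    rw [Set.mem_singleton_iff] at hh
    subst hh
    exact hC₂comm h hA₂C g hg
  have hforward : ∀ B ∈ C, ∃ B₁ ∈ C₁, ∃ B₂ ∈ C₂, B = iN (B₁, B₂) := by
    intro B hB
    have hBA : B * A = A * B := hCcomm B hB A hAC
    obtain ⟨pre1, pre2, B₁m, B₂m, hdet1, hdet2, hbe1, hbf1, hbe2, hbf2⟩ :=
      part1 B (hCsp hB) hBA
    have hc : ∀ x, B (A x) = A (B x) := by
      intro x
      have h1 : (B * A) x = B (A x) := rfl
      have h2 : (A * B) x = A (B x) := rfl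
      rw [← h1, ← h2, hBA]
    -- commutation of B₁m with A₁.1
    have l1 : B (A e₁) = (A₁.1 0 0 * B₁m 0 0 + A₁.1 1 0 * B₁m 0 1)•e₁
        + (A₁.1 0 0 * B₁m 1 0 + A₁.1 1 0 * B₁m 1 1)•f₁ := by
      rw [hA₁.1, map_add, map_smul, map_smul, hbe1, hbf1]; module
    have r1 : A (B e₁) = (B₁m 0 0 * A₁.1 0 0 + B₁m 1 0 * A₁.1 0 1)•e₁
        + (B₁m 0 0 * A₁.1 1 0 + B₁m 1 0 * A₁.1 1 1)•f₁ := by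
      rw [hbe1, map_add, map_smul, map_smul, hA₁.1, hA₁.2]; module
    have l2 : B (A f₁) = (A₁.1 0 1 * B₁m 0 0 + A₁.1 1 1 * B₁m 0 1)•e₁
        + (A₁.1 0 1 * B₁m 1 0 + A₁.1 1 1 * B₁m 1 1)•f₁ := by
      rw [hA₁.2, map_add, map_smul, map_smul, hbe1, hbf1]; module
    have r2 : A (B f₁) = (B₁m 0 1 * A₁.1 0 0 + B₁m 1 1 * A₁.1 0 1)•e₁
        + (B₁m 0 1 * A₁.1 1 0 + B₁m 1 1 * A₁.1 1 1)•f₁ := by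
      rw [hbf1, map_add, map_smul, map_smul, hA₁.1, hA₁.2]; module
    have k1 := hc e₁; rw [l1, r1] at k1
    have k2 := hc f₁; rw [l2, r2] at k2
    obtain ⟨q1, q2⟩ := pair_eq₁ _ _ _ _ k1
    obtain ⟨q3, q4⟩ := pair_eq₁ _ _ _ _ k2
    have hcomm1 : B₁m * A₁.1 = A₁.1 * B₁m := by
      ext i j
      fin_cases i <;> fin_cases j <;>
        simp only [Fin.zero_eta, Fin.mk_one, Fin.isValue, Matrix.mul_apply, Fin.sum_univ_two]
      · linear_combination q1
      · linear_combination q3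
      · linear_combination q2
      · linear_combination q4
    -- commutation of B₂m with A₂.1
    have l1' : B (A e₂) = (A₂.1 0 0 * B₂m 0 0 + A₂.1 1 0 * B₂m 0 1)•e₂
        + (A₂.1 0 0 * B₂m 1 0 + A₂.1 1 0 * B₂m 1 1)•f₂ := by
      rw [hA₂.1, map_add, map_smul, map_smul, hbe2, hbf2]; module
    have r1' : A (B e₂) = (B₂m 0 0 * A₂.1 0 0 + B₂m 1 0 * A₂.1 0 1)•e₂
        + (B₂m 0 0 * A₂.1 1 0 + B₂m 1 0 * A₂.1 1 1)•f₂ := by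
      rw [hbe2, map_add, map_smul, map_smul, hA₂.1, hA₂.2]; module
    have l2' : B (A f₂) = (A₂.1 0 1 * B₂m 0 0 + A₂.1 1 1 * B₂m 0 1)•e₂
        + (A₂.1 0 1 * B₂m 1 0 + A₂.1 1 1 * B₂m 1 1)•f₂ := by
      rw [hA₂.2, map_add, map_smul, map_smul, hbe2, hbf2]; module
    have r2' : A (B f₂) = (B₂m 0 1 * A₂.1 0 0 + B₂m 1 1 * A₂.1 0 1)•e₂
        + (B₂m 0 1 * A₂.1 1 0 + B₂m 1 1 * A₂.1 1 1)•f₂ := by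
      rw [hbf2, map_add, map_smul, map_smul, hA₂.1, hA₂.2]; module
    have k1' := hc e₂; rw [l1', r1'] at k1'
    have k2' := hc f₂; rw [l2', r2'] at k2'
    obtain ⟨q1', q2'⟩ := pair_eq₂ _ _ _ _ k1'
    obtain ⟨q3', q4'⟩ := pair_eq₂ _ _ _ _ k2'
    have hcomm2 : B₂m * A₂.1 = A₂.1 * B₂m := by
      ext i j
      fin_cases i <;> fin_cases j <;>
        simp only [Fin.zero_eta, Fin.mk_one, Fin.isValue, Matrix.mul_apply, Fin.sum_univ_two]
      · linear_combination q1'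
      · linear_combination q3'
      · linear_combination q2'
      · linear_combination q4'
    obtain ⟨S₁, hS₁⟩ : ∃ S : Matrix.SpecialLinearGroup (Fin 2) (ZMod N), S.1 = B₁m :=
      ⟨⟨B₁m, hdet1⟩, rfl⟩
    obtain ⟨S₂, hS₂⟩ : ∃ S : Matrix.SpecialLinearGroup (Fin 2) (ZMod N), S.1 = B₂m :=
      ⟨⟨B₂m, hdet2⟩, rfl⟩
    subst hS₁ hS₂
    refine ⟨S₁, ?_, S₂, ?_, ?_⟩
    · rw [← hZ₁eq]
      rw [Subgroup.mem_centralizer_iff]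
      intro h hh
      rw [Set.mem_singleton_iff] at hh
      subst hh
      apply Subtype.ext
      simp only [Matrix.SpecialLinearGroup.coe_mul]
      exact hcomm1.symm
    · rw [← hZ₂eq]
      rw [Subgroup.mem_centralizer_iff]
      intro h hh
      rw [Set.mem_singleton_iff] at hh
      subst hh
      apply Subtype.ext
      simp only [Matrix.SpecialLinearGroup.coe_mul]
      exact hcomm2.symm
    · apply hext
      · rw [(hiN _ _).1]; exact hbe1
      · rw [(hiN _ _).2.1]; exact hbf1
      · rw [(hiN _ _).2.2.1]; exact hbe2
      · rw [(hiN _ _).2.2.2]; exact hbf2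
  -- final assembly
  refine ⟨part1, hinj, fun B => ⟨hforward B, ?_⟩⟩
  rintro ⟨B₁, hB₁, B₂, hB₂, rfl⟩
  -- the image subgroup
  let C' : Subgroup (((ZMod N × ZMod N) × (ZMod N × ZMod N)) ≃ₗ[ZMod N]
      ((ZMod N × ZMod N) × (ZMod N × ZMod N))) :=
    { carrier := {g | ∃ D₁ ∈ C₁, ∃ D₂ ∈ C₂, g = iN (D₁, D₂)}
      one_mem' := ⟨1, one_mem _, 1, one_mem _, hiN_one.symm⟩
      mul_mem' := by
        rintro x y ⟨D₁, hD₁, D₂, hD₂, rfl⟩ ⟨E₁, hE₁, E₂, hE₂, rfl⟩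
        exact ⟨D₁*E₁, mul_mem hD₁ hE₁, D₂*E₂, mul_mem hD₂ hE₂, hiN_mul _ _ _ _⟩
      inv_mem' := by
        rintro x ⟨D₁, hD₁, D₂, hD₂, rfl⟩
        refine ⟨D₁⁻¹, inv_mem hD₁, D₂⁻¹, inv_mem hD₂, ?_⟩
        rw [inv_eq_iff_mul_eq_one, hiN_mul, mul_inv_cancel, mul_inv_cancel, hiN_one] }
  have hC'eq : C' = C := by
    apply hCmax
    · rintro g ⟨D₁, _, D₂, _, rfl⟩
      exact hiN_sp D₁ D₂
    · rintro x ⟨D₁, hD₁, D₂, hD₂, rfl⟩ y ⟨E₁, hE₁, E₂, hE₂, rfl⟩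
      rw [hiN_mul, hiN_mul, hC₁comm D₁ hD₁ E₁ hE₁, hC₂comm D₂ hD₂ E₂ hE₂]
    · intro g hg
      exact hforward g hg
  rw [← hC'eq]
  exact ⟨B₁, hB₁, B₂, hB₂, rfl⟩
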